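/- Let I be a bounded interval, H a Hilbert space, and (γ_n) a sequence of continuous curves γ_n : Ī → H such that ‖γ_n(t) − γ_n(t₀)‖_H ≤ ∫_{t₀}^t m_n(τ) dτ for all t₀ ≤ t in Ī, where m_n ∈ L¹(I) converges weakly in L¹(I) (σ(L¹, L^∞)) to m ∈ L¹(I). Suppose γ_n(t) → γ(t) weakly in H for every t ∈ Ī. Then ‖γ(t) − γ(t₀)‖_H ≤ ∫_{t₀}^t m(τ) dτ for all t₀ ≤ t; in particular γ is (norm) continuous from Ī to H. -/

import Mathlib

open MeasureTheory Filter RealInnerProductSpace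

/-- If continuous curves `γ_n` in a separable Hilbert space satisfy
`‖γ_n(t) − γ_n(t₀)‖ ≤ ∫_{t₀}^t m_n`, where `m_n → m` weakly in `L¹(I)`, and `γ_n(t) ⇀ γ(t)`
weakly in `H` for every `t`, then `‖γ(t) − γ(t₀)‖ ≤ ∫_{t₀}^t m`; in particular `γ` is
norm continuous on `Ī`. -/
theorem stmt_15 {H : Type*} [NormedAddCommGroup H] [InnerProductSpace ℝ H]
    [SecondCountableTopology H]
    (a b : ℝ) (γn : ℕ → ℝ → H) (γ : ℝ → H) (mn : ℕ → ℝ → ℝ) (m : ℝ → ℝ)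
    (hcont : ∀ n, ContinuousOn (γn n) (Set.Icc a b))
    (hmn : ∀ n, IntegrableOn (mn n) (Set.Icc a b)) (hm : IntegrableOn m (Set.Icc a b))
    (hbound : ∀ n, ∀ t₀ t : ℝ, a ≤ t₀ → t₀ ≤ t → t ≤ b →
      ‖γn n t - γn n t₀‖ ≤ ∫ τ in t₀..t, mn n τ)
    (hweakL1 : ∀ φ : ℝ → ℝ, Measurable φ → (∃ C : ℝ, ∀ t, |φ t| ≤ C) →
      Tendsto (fun n => ∫ t in Set.Icc a b, mn n t * φ t) atTop
        (nhds (∫ t in Set.Icc a b, m t * φ t)))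
    (hweakH : ∀ t ∈ Set.Icc a b, ∀ e : H,
      Tendsto (fun n => ⟪γn n t, e⟫) atTop (nhds ⟪γ t, e⟫)) :
    (∀ t₀ t : ℝ, a ≤ t₀ → t₀ ≤ t → t ≤ b → ‖γ t - γ t₀‖ ≤ ∫ τ in t₀..t, m τ) ∧
      ContinuousOn γ (Set.Icc a b) := by
  have key : ∀ t₀ t : ℝ, a ≤ t₀ → t₀ ≤ t → t ≤ b →
      ‖γ t - γ t₀‖ ≤ ∫ τ in t₀..t, m τ := by
    intro t₀ t ha₀ h₀t htb
    -- convergence of the interval integrals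
    have hrew : ∀ f : ℝ → ℝ,
        (∫ x in Set.Icc a b, f x * (Set.Icc t₀ t).indicator (fun _ => (1:ℝ)) x)
          = ∫ τ in t₀..t, f τ := by
      intro f
      have : (fun x => f x * (Set.Icc t₀ t).indicator (fun _ => (1:ℝ)) x)
          = (Set.Icc t₀ t).indicator f := by
        funext x
        by_cases hx : x ∈ Set.Icc t₀ t <;>
          simp [Set.indicator_apply, hx]
      rw [this, MeasureTheory.setIntegral_indicator measurableSet_Icc,
        Set.inter_eq_right.mpr (Set.Icc_subset_Icc ha₀ htb),
        MeasureTheory.integral_Icc_eq_integral_Ioc,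
        intervalIntegral.integral_of_le h₀t]
    have hint : Tendsto (fun n => ∫ τ in t₀..t, mn n τ) atTop
        (nhds (∫ τ in t₀..t, m τ)) := by
      have := hweakL1 ((Set.Icc t₀ t).indicator (fun _ => (1:ℝ)))
        (measurable_const.indicator measurableSet_Icc)
        ⟨1, by
          intro x
          by_cases hx : x ∈ Set.Icc t₀ t <;> simp [Set.indicator_apply, hx]⟩
      simpa [hrew] using this
    set v := γ t - γ t₀ with hv
    have ht₀mem : t₀ ∈ Set.Icc a b := ⟨ha₀, h₀t.trans htb⟩
    have htmem : t ∈ Set.Icc a b := ⟨ha₀.trans h₀t, htb⟩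
    have hinner : Tendsto (fun n => ⟪γn n t - γn n t₀, v⟫) atTop (nhds ⟪v, v⟫) := by
      have h1 := hweakH t htmem v
      have h2 := hweakH t₀ ht₀mem v
      have := h1.sub h2
      simpa only [← inner_sub_left, ← hv] using this
    have hLnn : 0 ≤ ∫ τ in t₀..t, m τ :=
      ge_of_tendsto' hint fun n => le_trans (norm_nonneg _) (hbound n t₀ t ha₀ h₀t htb)
    have hsq : ⟪v, v⟫ ≤ (∫ τ in t₀..t, m τ) * ‖v‖ := by
      refine le_of_tendsto_of_tendsto' hinner (hint.mul tendsto_const_nhds) fun n => ?_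
      calc ⟪γn n t - γn n t₀, v⟫ ≤ ‖γn n t - γn n t₀‖ * ‖v‖ := real_inner_le_norm _ _
        _ ≤ (∫ τ in t₀..t, mn n τ) * ‖v‖ :=
          mul_le_mul_of_nonneg_right (hbound n t₀ t ha₀ h₀t htb) (norm_nonneg _)
    rw [real_inner_self_eq_norm_sq] at hsq
    rcases eq_or_lt_of_le (norm_nonneg v) with h0 | h0
    · rw [← h0]; exact hLnn
    · nlinarith
  refine ⟨key, ?_⟩
  -- continuity
  have hF : ContinuousOn (fun x => ∫ τ in Set.Ioc a x, m τ) (Set.Icc a b) :=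
    intervalIntegral.continuousOn_primitive hm
  intro s hs
  rw [ContinuousWithinAt, tendsto_iff_dist_tendsto_zero]
  have hFs : Tendsto (fun t => dist ((fun x => ∫ τ in Set.Ioc a x, m τ) t)
      (∫ τ in Set.Ioc a s, m τ)) (nhdsWithin s (Set.Icc a b)) (nhds 0) := by
    have := hF s hs
    rw [ContinuousWithinAt, tendsto_iff_dist_tendsto_zero] at this
    exact this
  refine squeeze_zero' (Eventually.of_forall fun t => dist_nonneg) ?_ hFs
  filter_upwards [self_mem_nhdsWithin] with t ht
  have hdist : ∀ u w : ℝ, u ∈ Set.Icc a b → w ∈ Set.Icc a b → u ≤ w →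
      dist (γ w) (γ u) ≤ dist (∫ τ in Set.Ioc a w, m τ) (∫ τ in Set.Ioc a u, m τ) := by
    intro u w hu hw huw
    have h1 : ‖γ w - γ u‖ ≤ ∫ τ in u..w, m τ := key u w hu.1 huw hw.2
    have hsub : (∫ τ in Set.Ioc a w, m τ) - (∫ τ in Set.Ioc a u, m τ) = ∫ τ in u..w, m τ := by
      rw [← intervalIntegral.integral_of_le hu.1, ← intervalIntegral.integral_of_le hw.1,
        intervalIntegral.integral_interval_sub_left]
      · exact (intervalIntegrable_iff_integrableOn_Ioc_of_le hw.1).mpr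
          (hm.mono (Set.Ioc_subset_Icc_self.trans (Set.Icc_subset_Icc le_rfl hw.2)) le_rfl)
      · exact (intervalIntegrable_iff_integrableOn_Ioc_of_le hu.1).mpr
          (hm.mono (Set.Ioc_subset_Icc_self.trans (Set.Icc_subset_Icc le_rfl hu.2)) le_rfl)
    rw [dist_eq_norm, dist_eq_norm, Real.norm_eq_abs]
    calc ‖γ w - γ u‖ ≤ ∫ τ in u..w, m τ := h1
      _ = (∫ τ in Set.Ioc a w, m τ) - (∫ τ in Set.Ioc a u, m τ) := hsub.symm
      _ ≤ |(∫ τ in Set.Ioc a w, m τ) - (∫ τ in Set.Ioc a u, m τ)| := le_abs_self _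
  rcases le_total s t with hst | hts
  · simpa [dist_comm] using hdist s t hs ht hst
  · simpa [dist_comm] using hdist t s ht hs hts
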